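/- Let Γ : K → 𝒫(ℝⁿ) assign to each point m of a metric space K a closed convex cone Γ_m ⊆ ℝⁿ, and suppose there is c > 0 and a linear functional T on ℝⁿ such that every v ∈ Γ_m satisfies ‖v‖ ≤ c·T(v). Let γ_n : [0,1] → K ⊆ ℝᴺ be a sequence of uniformly Lipschitz curves with derivatives γ_n'(s) ∈ Γ_{γ_n(s)} a.e., converging uniformly to γ. If the assignment m ↦ Γ_m is inner semi-continuous in the sense that limits of vectors v_n ∈ Γ_{m_n} with m_n → m lie in Γ_m, and each Γ_m is closed and convex, then γ is Lipschitz and γ'(s) ∈ Γ_{γ(s)} for a.e. s. -/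

import Mathlib

open Filter Topology MeasureTheory Set

lemma lipschitz_ae_deriv_le {f : ℝ → ℝ} {M : NNReal} {a b C : ℝ}
    (hab : a ≤ b) (hf : LipschitzOnWith M f (Icc a b))
    (hder : ∀ᵐ t ∂(volume.restrict (Icc a b)), ∃ d, HasDerivAt f d t ∧ d ≤ C) :
    f b - f a ≤ C * (b - a) := by
  rcases eq_or_lt_of_le hab with rfl | hab'
  · simp
  have key : ∀ ε > (0:ℝ), f b - f a ≤ C * (b - a) + ε * ((b - a) + ((M:ℝ) + |C| + 1) + 1) := by
    intro ε hε
    set Kc : ℝ := (M:ℝ) + |C| + 1 with hKc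
    have hKc0 : 0 < Kc := by positivity
    -- bad set
    have hP : ∀ᵐ t ∂(volume : Measure ℝ), t ∈ Icc a b → ∃ d, HasDerivAt f d t ∧ d ≤ C :=
      (ae_restrict_iff' measurableSet_Icc).mp hder
    set Bad : Set ℝ := {t | ¬ (t ∈ Icc a b → ∃ d, HasDerivAt f d t ∧ d ≤ C)} with hBad
    have hBadnull : volume Bad = 0 := hP
    obtain ⟨U, hBU, hUopen, hUvol⟩ :=
      Set.exists_isOpen_lt_of_lt Bad (ENNReal.ofReal ε)
        (by rw [hBadnull]; exact ENNReal.ofReal_pos.mpr hε)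
    have hUfin : ∀ s : Set ℝ, volume (U ∩ s) ≠ ⊤ :=
      fun s => ((measure_mono inter_subset_left).trans_lt (hUvol.trans_le le_top)).ne
    set w : ℝ → ℝ := fun x => (volume (U ∩ Ioc a x)).toReal with hw
    have hwa : w a = 0 := by simp [hw]
    -- additivity of w
    have hwadd : ∀ x y, a ≤ x → x ≤ y →
        w y - w x = (volume (U ∩ Ioc x y)).toReal := by
      intro x y hax hxy
      have hsplit : U ∩ Ioc a y = (U ∩ Ioc a x) ∪ (U ∩ Ioc x y) := by
        rw [← inter_union_distrib_left, Ioc_union_Ioc_eq_Ioc hax hxy]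
      have hdisj : Disjoint (U ∩ Ioc a x) (U ∩ Ioc x y) :=
        (Set.Ioc_disjoint_Ioc_of_le le_rfl).mono inter_subset_right inter_subset_right
      have := measure_union (μ := volume) hdisj (hUopen.measurableSet.inter measurableSet_Ioc)
      rw [hw]; simp only
      rw [hsplit, this, ENNReal.toReal_add (hUfin _) (hUfin _)]
      ring
    have hwle : ∀ x y, a ≤ x → x ≤ y → w y - w x ≤ y - x := by
      intro x y hax hxy
      rw [hwadd x y hax hxy]
      calc (volume (U ∩ Ioc x y)).toReal ≤ (volume (Ioc x y)).toReal := by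
            apply ENNReal.toReal_mono (by simp) (measure_mono inter_subset_right)
        _ = y - x := by rw [Real.volume_Ioc, ENNReal.toReal_ofReal (by linarith)]
    have hweq : ∀ x y, a ≤ x → x ≤ y → Ioc x y ⊆ U → w y - w x = y - x := by
      intro x y hax hxy hsub
      rw [hwadd x y hax hxy, inter_eq_self_of_subset_right hsub, Real.volume_Ioc,
        ENNReal.toReal_ofReal (by linarith)]
    have hwmono : ∀ x y, a ≤ x → x ≤ y → w x ≤ w y := by
      intro x y hax hxy
      have := hwadd x y hax hxy
      have : (0:ℝ) ≤ w y - w x := by rw [this]; positivity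
      linarith
    have hw0 : ∀ x, x ≤ a → w x = 0 := by
      intro x hx
      have : Ioc a x = ∅ := Ioc_eq_empty (by intro h; linarith)
      simp [hw, this]
    have hwm : ∀ x y, y ≤ x → w y ≤ w x ∧ w x - w y ≤ x - y := by
      intro x y hyx
      rcases le_total x a with hxa | hax
      · rw [hw0 x hxa, hw0 y (hyx.trans hxa)]
        constructor <;> linarith
      · rcases le_total y a with hya | hay
        · rw [hw0 y hya]
          have h1 := hwle a x le_rfl hax
          rw [hwa] at h1
          have h2 := hwmono a x le_rfl hax
          rw [hwa] at h2
          constructor <;> linarith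
        · exact ⟨hwmono y x hay hyx, hwle y x hay hyx⟩
    have hwcont : Continuous w := by
      have : LipschitzWith 1 w := by
        apply LipschitzWith.of_dist_le_mul
        intro x y
        simp only [NNReal.coe_one, one_mul, Real.dist_eq]
        wlog hxy : y ≤ x generalizing x y
        · rw [abs_sub_comm (w x) (w y), abs_sub_comm x y]; exact this y x (le_of_not_ge hxy)
        obtain ⟨h1, h2⟩ := hwm x y hxy
        rw [abs_of_nonneg (by linarith), abs_of_nonneg (by linarith)]
        linarith
      exact this.continuous
    set hfun : ℝ → ℝ := fun x => C * (x - a) + ε * (x - a) + Kc * w x + ε with hhfun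
    have hhcont : Continuous hfun := by fun_prop
    set A : Set ℝ := {x | x ∈ Icc a b ∧ f x - f a ≤ hfun x} with hA
    have hAsub : A ⊆ Icc a b := fun x hx => hx.1
    have hAclosed : IsClosed A := by
      have : A = Icc a b ∩ (fun x => f x - f a - hfun x) ⁻¹' (Iic 0) := by
        ext x
        simp only [hA, mem_setOf_eq, mem_inter_iff, mem_preimage, mem_Iic, sub_nonpos]
      rw [this]
      exact ContinuousOn.preimage_isClosed_of_isClosed
        (((hf.continuousOn).sub continuousOn_const).sub hhcont.continuousOn)
        isClosed_Icc isClosed_Iic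
    have haA : a ∈ A := by
      refine ⟨⟨le_rfl, hab⟩, ?_⟩
      rw [hhfun]; simp [hwa]; linarith
    have hAbdd : BddAbove A := (bddAbove_Icc).mono hAsub
    set x₀ := sSup A with hx₀
    have hx₀A : x₀ ∈ A := hAclosed.csSup_mem ⟨a, haA⟩ hAbdd
    have hx₀I : x₀ ∈ Icc a b := hAsub hx₀A
    -- main step: x₀ = b
    have hx₀b : x₀ = b := by
      by_contra hne
      have hx₀lt : x₀ < b := lt_of_le_of_ne hx₀I.2 hne
      have hcontr : ∀ y, x₀ < y → y ≤ b → f y - f x₀ ≤ hfun y - hfun x₀ → False := by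
        intro y hy hyb hle
        have hyA : y ∈ A := ⟨⟨hx₀I.1.trans hy.le, hyb⟩, by have h2 := hx₀A.2; linarith⟩
        have hyx : y ≤ sSup A := le_csSup hAbdd hyA
        rw [← hx₀] at hyx
        linarith
      have hdiff : ∀ y, hfun y - hfun x₀ = (C + ε) * (y - x₀) + Kc * (w y - w x₀) := by
        intro y; rw [hhfun]; ring
      by_cases hxU : x₀ ∈ U
      · obtain ⟨η, hη, hball⟩ := Metric.isOpen_iff.mp hUopen x₀ hxU
        set y := min b (x₀ + η / 2) with hy
        have hx₀y : x₀ < y := lt_min hx₀lt (by linarith)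
        have hyb : y ≤ b := min_le_left _ _
        have hsub : Ioc x₀ y ⊆ U := by
          intro t ht
          apply hball
          rw [Metric.mem_ball, Real.dist_eq, abs_of_pos (by linarith [ht.1])]
          have h3 : t ≤ x₀ + η / 2 := ht.2.trans (min_le_right _ _)
          linarith [ht.1]
        have hweq' := hweq x₀ y hx₀I.1 hx₀y.le hsub
        have hlip : f y - f x₀ ≤ (M : ℝ) * (y - x₀) := by
          have hd := (lipschitzOnWith_iff_dist_le_mul.mp hf) y ⟨hx₀I.1.trans hx₀y.le, hyb⟩ x₀ hx₀I
          calc f y - f x₀ ≤ |f y - f x₀| := le_abs_self _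
            _ = dist (f y) (f x₀) := (Real.dist_eq _ _).symm
            _ ≤ (M : ℝ) * dist y x₀ := hd
            _ = (M : ℝ) * (y - x₀) := by rw [Real.dist_eq, abs_of_pos (by linarith)]
        refine hcontr y hx₀y hyb ?_
        rw [hdiff y, hweq']
        have hKcM : (M : ℝ) ≤ C + ε + Kc := by
          have h4 := neg_abs_le C; rw [hKc]; linarith
        nlinarith [mul_le_mul_of_nonneg_right hKcM (sub_pos.mpr hx₀y).le]
      · have hPx : ∃ d, HasDerivAt f d x₀ ∧ d ≤ C := by
          by_contra hcon
          exact hxU (hBU (fun h => hcon (h hx₀I)))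
        obtain ⟨d, hd, hdC⟩ := hPx
        have hslope := hasDerivAt_iff_tendsto_slope.mp hd
        have hev1 : ∀ᶠ z in 𝓝[>] x₀, slope f x₀ z < C + ε :=
          (hslope.mono_left (nhdsWithin_mono _ (fun z hz => ne_of_gt hz))).eventually_lt_const
            (by linarith)
        have hev2 : Ioc x₀ b ∈ 𝓝[>] x₀ := Ioc_mem_nhdsGT_of_mem ⟨le_rfl, hx₀lt⟩
        obtain ⟨y, hsl, hyI⟩ := (hev1.and (eventually_of_mem hev2 (fun z hz => hz))).exists
        have hne' : y - x₀ ≠ 0 := sub_ne_zero.mpr (ne_of_gt hyI.1)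
        have heq : f y - f x₀ = slope f x₀ y * (y - x₀) := by
          rw [slope_def_field]; field_simp
        refine hcontr y hyI.1 hyI.2 ?_
        rw [hdiff y, heq]
        have h5 : w x₀ ≤ w y := (hwm y x₀ hyI.1.le).1
        nlinarith [mul_le_mul_of_nonneg_right hsl.le (sub_pos.mpr hyI.1).le, hKc0]
    rw [← hx₀b] at *
    have := hx₀A.2
    have hwb : w x₀ ≤ ε := by
      have h1 : volume (U ∩ Ioc a x₀) ≤ ENNReal.ofReal ε :=
        le_trans (measure_mono inter_subset_left) hUvol.le
      calc w x₀ ≤ (ENNReal.ofReal ε).toReal := ENNReal.toReal_mono (by simp) h1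
        _ = ε := ENNReal.toReal_ofReal hε.le
    rw [hhfun] at this; simp only at this
    nlinarith [hKc0, hε]
  -- conclude
  set Kk : ℝ := (b - a) + ((M:ℝ) + |C| + 1) + 1 with hKk
  have hKk0 : 0 < Kk := by have h1 := abs_nonneg C; have h2 := M.coe_nonneg; linarith
  refine le_of_forall_pos_le_add ?_
  intro ε' hε'
  have := key (ε' / Kk) (by positivity)
  calc f b - f a ≤ C * (b - a) + (ε' / Kk) * Kk := this
    _ = C * (b - a) + ε' := by field_simp

lemma lipschitz_ae_deriv_mem {E : Type*} [NormedAddCommGroup E] [NormedSpace ℝ E]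
    {f : ℝ → E} {M : NNReal} {a b : ℝ} {S : Set E}
    (hab : a < b) (hf : LipschitzOnWith M f (Icc a b))
    (hS : Convex ℝ S) (hSc : IsClosed S)
    (hder : ∀ᵐ t ∂(volume.restrict (Icc a b)), ∃ d, HasDerivAt f d t ∧ d ∈ S) :
    (b - a)⁻¹ • (f b - f a) ∈ S := by
  by_contra hnot
  obtain ⟨φ, u, hu1, hu2⟩ := geometric_hahn_banach_closed_point hS hSc hnot
  have hg : LipschitzOnWith (‖φ‖₊ * M) (fun t => φ (f t)) (Icc a b) :=
    φ.lipschitz.comp_lipschitzOnWith hf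
  have hder' : ∀ᵐ t ∂(volume.restrict (Icc a b)),
      ∃ d, HasDerivAt (fun t => φ (f t)) d t ∧ d ≤ u := by
    filter_upwards [hder] with t ht
    obtain ⟨d, hd, hdS⟩ := ht
    exact ⟨φ d, φ.hasFDerivAt.comp_hasDerivAt t hd, (hu1 d hdS).le⟩
  have hmain := lipschitz_ae_deriv_le hab.le hg hder'
  have hba : 0 < b - a := sub_pos.2 hab
  have hφ : φ ((b - a)⁻¹ • (f b - f a)) = (b - a)⁻¹ * (φ (f b) - φ (f a)) := by
    rw [_root_.map_smul, map_sub]; rfl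
  rw [hφ] at hu2
  have hinv : (b - a)⁻¹ * (b - a) = 1 := inv_mul_cancel₀ hba.ne'
  have h6 := mul_le_mul_of_nonneg_left hmain (inv_nonneg.2 hba.le)
  rw [show (b - a)⁻¹ * (u * (b - a)) = u * ((b - a)⁻¹ * (b - a)) by ring, hinv, mul_one] at h6
  linarith

lemma cone_usc {E : Type*} [NormedAddCommGroup E] [NormedSpace ℝ E] [ProperSpace E]
    (Γ : E → Set E)
    (hisc : ∀ (m : E) (mseq vseq : ℕ → E) (v : E), Tendsto mseq atTop (𝓝 m) →
      (∀ k, vseq k ∈ Γ (mseq k)) → Tendsto vseq atTop (𝓝 v) → v ∈ Γ m)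
    (m₀ : E) (R ε : ℝ) (hε : 0 < ε) :
    ∃ δ > 0, ∀ m, dist m m₀ < δ → ∀ v ∈ Γ m, ‖v‖ ≤ R → ∃ w ∈ Γ m₀, dist v w ≤ ε := by
  by_contra hcon
  push_neg at hcon
  have hch : ∀ k : ℕ, ∃ m, dist m m₀ < 1/(k+1 : ℝ) ∧
      ∃ v, v ∈ Γ m ∧ ‖v‖ ≤ R ∧ ∀ w ∈ Γ m₀, ε < dist v w := by
    intro k
    obtain ⟨m, hm, v, hv, hvR, hw⟩ := hcon (1/(k+1 : ℝ)) (by positivity)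
    exact ⟨m, hm, v, hv, hvR, hw⟩
  choose mseq hm vseq hv hvR hw using hch
  have hmt : Tendsto mseq atTop (𝓝 m₀) := by
    rw [tendsto_iff_dist_tendsto_zero]
    apply squeeze_zero (fun k => dist_nonneg) (fun k => (hm k).le)
    exact tendsto_one_div_add_atTop_nhds_zero_nat
  obtain ⟨v, hvball, φ, hφ, hvt⟩ := (isCompact_closedBall (0:E) R).tendsto_subseq
      (fun k => mem_closedBall_zero_iff.mpr (hvR k))
  have hvΓ : v ∈ Γ m₀ := hisc m₀ (mseq ∘ φ) (vseq ∘ φ) v (hmt.comp hφ.tendsto_atTop)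
      (fun k => hv (φ k)) hvt
  obtain ⟨N, hN⟩ := Metric.tendsto_atTop.mp hvt ε hε
  exact absurd (hN N le_rfl) (not_lt.mpr (hw (φ N) v hvΓ).le)

/-- Closedness of rays (Lemma 4.2, item 1): a uniform limit of uniformly Lipschitz curves
tangent a.e. to an inner semi-continuous field of closed convex cones `Γ_m`, satisfying
a uniform transversality bound `‖v‖ ≤ c·T(v)` on the cones, is Lipschitz and tangent
a.e. to the cones. -/
theorem limit_of_rays_is_ray
    (N : ℕ) (K : Set (EuclideanSpace ℝ (Fin N))) (hK : IsCompact K)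
    (Γ : EuclideanSpace ℝ (Fin N) → Set (EuclideanSpace ℝ (Fin N)))
    (hclosed : ∀ m, IsClosed (Γ m))
    (hconvex : ∀ m, Convex ℝ (Γ m))
    (hcone : ∀ m, ∀ r : ℝ, 0 ≤ r → ∀ v ∈ Γ m, r • v ∈ Γ m)
    (c : ℝ) (hc : 0 < c)
    (T : EuclideanSpace ℝ (Fin N) →ₗ[ℝ] ℝ)
    (hT : ∀ m, ∀ v ∈ Γ m, ‖v‖ ≤ c * T v)
    (hisc : ∀ (m : EuclideanSpace ℝ (Fin N)) (mseq vseq : ℕ → EuclideanSpace ℝ (Fin N))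
      (v : EuclideanSpace ℝ (Fin N)), Tendsto mseq atTop (𝓝 m) →
      (∀ k, vseq k ∈ Γ (mseq k)) → Tendsto vseq atTop (𝓝 v) → v ∈ Γ m)
    (L : NNReal)
    (γn : ℕ → ℝ → EuclideanSpace ℝ (Fin N))
    (hγnK : ∀ n, ∀ s ∈ Icc (0 : ℝ) 1, γn n s ∈ K)
    (hγnLip : ∀ n, LipschitzOnWith L (γn n) (Icc (0 : ℝ) 1))
    (hγn' : ∀ n, ∀ᵐ s ∂(volume.restrict (Icc (0 : ℝ) 1)),
      HasDerivAt (γn n) (deriv (γn n) s) s ∧ deriv (γn n) s ∈ Γ (γn n s))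
    (γ : ℝ → EuclideanSpace ℝ (Fin N))
    (hconv : TendstoUniformlyOn γn γ atTop (Icc (0 : ℝ) 1)) :
    LipschitzOnWith L γ (Icc (0 : ℝ) 1) ∧
    ∀ᵐ s ∂(volume.restrict (Icc (0 : ℝ) 1)),
      ∀ v, HasDerivAt γ v s → v ∈ Γ (γ s) := by
  have hLip : LipschitzOnWith L γ (Icc (0:ℝ) 1) := by
    rw [lipschitzOnWith_iff_dist_le_mul]
    intro x hx y hy
    have h1 : Tendsto (fun n => dist (γn n x) (γn n y)) atTop (𝓝 (dist (γ x) (γ y))) :=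
      (hconv.tendsto_at hx).dist (hconv.tendsto_at hy)
    exact le_of_tendsto h1 (Eventually.of_forall fun n =>
      (lipschitzOnWith_iff_dist_le_mul.mp (hγnLip n)) x hx y hy)
  refine ⟨hLip, ?_⟩
  have hae0 : ∀ᵐ t ∂(volume : Measure ℝ), t ≠ 1 := by
    rw [ae_iff]
    refine measure_mono_null (fun t ht => ?_) (measure_singleton (1:ℝ))
    simpa using not_not.mp ht
  have hae1 : ∀ᵐ s ∂(volume.restrict (Icc (0:ℝ) 1)), s ≠ 1 :=
    ae_mono Measure.restrict_le_self hae0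
  filter_upwards [hae1, ae_restrict_mem measurableSet_Icc] with s hs1 hsI
  intro v hv
  have hs0 : (0:ℝ) ≤ s := hsI.1
  have hslt : s < 1 := lt_of_le_of_ne hsI.2 hs1
  refine (hclosed (γ s)).closure_subset ?_
  rw [Metric.mem_closure_iff]
  intro ε hε
  obtain ⟨δ, hδ, hδp⟩ := cone_usc Γ hisc (γ s) L (ε/4) (by linarith)
  -- choose y close to s on the right
  have htend : Tendsto (slope γ s) (𝓝[>] s) (𝓝 v) :=
    (hasDerivAt_iff_tendsto_slope.mp hv).mono_left
      (nhdsWithin_mono _ (fun z hz => ne_of_gt hz))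
  have hev1 : ∀ᶠ z in 𝓝[>] s, dist (slope γ s z) v < ε/4 :=
    (Metric.tendsto_nhds.mp htend) (ε/4) (by linarith)
  have hev2 : Ioc s 1 ∈ 𝓝[>] s := Ioc_mem_nhdsGT_of_mem ⟨le_rfl, hslt⟩
  have hLpos : (0:ℝ) < (L:ℝ) + 1 := by positivity
  have hev3 : Ioo s (s + δ/(2*((L:ℝ)+1))) ∈ 𝓝[>] s := by
    have h12 : 0 < δ/(2*((L:ℝ)+1)) := by positivity
    exact Ioo_mem_nhdsGT (by linarith)
  obtain ⟨y, hdisty, hy1, hyδ⟩ :=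
    (hev1.and ((eventually_of_mem hev2 (fun z hz => hz)).and
      (eventually_of_mem hev3 (fun z hz => hz)))).exists
  have hsy : s < y := hy1.1
  have hy01 : y ∈ Icc (0:ℝ) 1 := ⟨le_trans hs0 hsy.le, hy1.2⟩
  have hLys : (L:ℝ) * (y - s) < δ/2 := by
    have h8 : y - s < δ/(2*((L:ℝ)+1)) := by have := hyδ.2; linarith
    have h9 : (L:ℝ) * (y - s) ≤ ((L:ℝ)+1) * (y - s) := by nlinarith [sub_pos.mpr hsy]
    calc (L:ℝ) * (y - s) ≤ ((L:ℝ)+1) * (y - s) := h9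
      _ < ((L:ℝ)+1) * (δ/(2*((L:ℝ)+1))) := by
          exact mul_lt_mul_of_pos_left h8 hLpos
      _ = δ/2 := by field_simp
  set S : Set (EuclideanSpace ℝ (Fin N)) :=
      Metric.cthickening (ε/4) (Γ (γ s)) ∩ Metric.closedBall 0 (L:ℝ) with hS
  have hSconv : Convex ℝ S := ((hconvex _).cthickening _).inter (convex_closedBall _ _)
  have hSclosed : IsClosed S := Metric.isClosed_cthickening.inter Metric.isClosed_closedBall
  have hsub : Icc s y ⊆ Icc (0:ℝ) 1 := Icc_subset_Icc hs0 hy01.2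
  have hmono : volume.restrict (Icc s y) ≤ volume.restrict (Icc (0:ℝ) 1) :=
    Measure.restrict_mono hsub le_rfl
  have h01' : ∀ᵐ t ∂(volume : Measure ℝ), t ≠ 0 ∧ t ≠ 1 := by
    rw [ae_iff]
    refine measure_mono_null (fun t ht => ?_) (measure_union_null
      (measure_singleton (0:ℝ)) (measure_singleton (1:ℝ)))
    simp only [mem_setOf_eq, not_and_or, not_ne_iff] at ht
    rcases ht with h | h <;> simp [h]
  have h01 : ∀ᵐ t ∂(volume.restrict (Icc s y)), t ≠ 0 ∧ t ≠ 1 :=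
    ae_mono Measure.restrict_le_self h01'
  have hevmem : ∀ᶠ n in atTop, (y - s)⁻¹ • (γn n y - γn n s) ∈ S := by
    filter_upwards [Metric.tendstoUniformlyOn_iff.mp hconv (δ/2) (by linarith)] with n hn
    have hder : ∀ᵐ t ∂(volume.restrict (Icc s y)),
        ∃ d, HasDerivAt (γn n) d t ∧ d ∈ S := by
      filter_upwards [ae_mono hmono (hγn' n), ae_restrict_mem measurableSet_Icc, h01]
        with t ht htI ht01
      have ht0 : (0:ℝ) < t := lt_of_le_of_ne (le_trans hs0 htI.1) (Ne.symm ht01.1)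
      have ht1 : t < 1 := lt_of_le_of_ne (le_trans htI.2 hy01.2) ht01.2
      have htIcc : t ∈ Icc (0:ℝ) 1 := ⟨ht0.le, ht1.le⟩
      have hnorm : ‖deriv (γn n) t‖ ≤ (L:ℝ) := by
        have hb := ht.1.hasFDerivAt.le_of_lipschitzOn (Icc_mem_nhds ht0 ht1) (hγnLip n)
        simp only [ContinuousLinearMap.norm_smulRight_apply] at hb
        simpa using hb
      have hdist : dist (γn n t) (γ s) < δ := by
        have h10 : dist (γn n t) (γ t) < δ/2 := by
          rw [dist_comm]; exact hn t htIcc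
        have h11 : dist (γ t) (γ s) ≤ (L:ℝ) * (y - s) := by
          calc dist (γ t) (γ s) ≤ (L:ℝ) * dist t s :=
                (lipschitzOnWith_iff_dist_le_mul.mp hLip) t htIcc s hsI
            _ ≤ (L:ℝ) * (y - s) := by
                apply mul_le_mul_of_nonneg_left _ L.coe_nonneg
                rw [Real.dist_eq, abs_of_nonneg (by linarith [htI.1])]
                linarith [htI.2]
        calc dist (γn n t) (γ s) ≤ dist (γn n t) (γ t) + dist (γ t) (γ s) :=
              dist_triangle _ _ _
          _ < δ/2 + (L:ℝ) * (y - s) := by linarith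
          _ < δ := by linarith
      obtain ⟨w, hwΓ, hwd⟩ := hδp (γn n t) hdist (deriv (γn n) t) ht.2 hnorm
      exact ⟨deriv (γn n) t, ht.1,
        Metric.mem_cthickening_of_dist_le _ w _ _ hwΓ hwd,
        mem_closedBall_zero_iff.mpr hnorm⟩
    exact lipschitz_ae_deriv_mem hsy ((hγnLip n).mono hsub) hSconv hSclosed hder
  have htendn : Tendsto (fun n => (y - s)⁻¹ • (γn n y - γn n s)) atTop
      (𝓝 ((y - s)⁻¹ • (γ y - γ s))) :=
    ((hconv.tendsto_at hy01).sub (hconv.tendsto_at hsI)).const_smul _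
  have huS : (y - s)⁻¹ • (γ y - γ s) ∈ S := hSclosed.mem_of_tendsto htendn hevmem
  have h7 : EMetric.infEdist ((y - s)⁻¹ • (γ y - γ s)) (Γ (γ s)) < ENNReal.ofReal (ε/2) :=
    lt_of_le_of_lt (Metric.mem_cthickening_iff.mp huS.1)
      ((ENNReal.ofReal_lt_ofReal_iff (by linarith)).mpr (by linarith))
  obtain ⟨w, hwΓ, hwd⟩ := EMetric.infEdist_lt_iff.mp h7
  refine ⟨w, hwΓ, ?_⟩
  have hd1 : dist ((y - s)⁻¹ • (γ y - γ s)) w < ε/2 := edist_lt_ofReal.mp hwd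
  have hslope_eq : slope γ s y = (y - s)⁻¹ • (γ y - γ s) := by
    simp [slope, vsub_eq_sub]
  have hd2 : dist ((y - s)⁻¹ • (γ y - γ s)) v < ε/4 := by
    rw [← hslope_eq]; exact hdisty
  calc dist v w ≤ dist v ((y - s)⁻¹ • (γ y - γ s)) + dist ((y - s)⁻¹ • (γ y - γ s)) w :=
        dist_triangle _ _ _
    _ < ε/4 + ε/2 := by rw [dist_comm] at hd2; exact add_lt_add hd2 hd1
    _ < ε := by linarith
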